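/- Let n ≥ 3 be divisible by 3. In the wreath graph C_n[2K_1], the element t_1 = ∏_{j ≡ 1,2 (mod 3)} σ_j of the coordinate-swap group, together with its conjugates t_2 = ρ^{-1} t_1 ρ and t_3 = ρ^{-1} t_2 ρ, generates with the identity a subgroup T of order 4 isomorphic to the Klein four-group that is normalized by both ρ and μ. -/

import Mathlib

/-- The wreath graph `C_n[2K_1]`. -/
def wreath (n : ℕ) : SimpleGraph (ZMod n × Fin 2) where
  Adj u v := u ≠ v ∧ (v.1 = u.1 + 1 ∨ u.1 = v.1 + 1)
  symm := ⟨by rintro u v ⟨h1, h2⟩; exact ⟨h1.symm, h2.symm⟩⟩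
  loopless := ⟨by rintro u ⟨h, _⟩; exact h rfl⟩

/-- The rotation `ρ : (i,s) ↦ (i+1,s)`. -/
def wRho (n : ℕ) : Equiv.Perm (ZMod n × Fin 2) :=
  Equiv.prodCongr (Equiv.addRight 1) (Equiv.refl _)

/-- The reflection `μ : (i,s) ↦ (-i,s)`. -/
def wMu (n : ℕ) : Equiv.Perm (ZMod n × Fin 2) :=
  Equiv.prodCongr (Equiv.neg (ZMod n)) (Equiv.refl _)

/-- The underlying function of `t₁ = ∏_{j ≡ 1,2 (mod 3)} σ_j`: it swaps `(j,0)`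
and `(j,1)` for every `j` not divisible by `3` and fixes everything else. -/
def t1fun (n : ℕ) : ZMod n × Fin 2 → ZMod n × Fin 2 :=
  fun p => if p.1.val % 3 ≠ 0 then (p.1, 1 - p.2) else p

lemma t1fun_involutive (n : ℕ) : Function.Involutive (t1fun n) := by
  intro p
  unfold t1fun
  by_cases h : p.1.val % 3 ≠ 0 <;> simp [h]

/-- `t₁ = ∏_{j ≡ 1,2 (mod 3)} σ_j` as a permutation. -/
def t1perm (n : ℕ) : Equiv.Perm (ZMod n × Fin 2) :=
  (t1fun_involutive n).toPerm

def wT2 (n : ℕ) : Equiv.Perm (ZMod n × Fin 2) := (wRho n)⁻¹ * t1perm n * wRho n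
def wT3 (n : ℕ) : Equiv.Perm (ZMod n × Fin 2) :=
  (wRho n)⁻¹ * ((wRho n)⁻¹ * t1perm n * wRho n) * wRho n

lemma wRho_apply (n : ℕ) (p : ZMod n × Fin 2) : wRho n p = (p.1 + 1, p.2) := rfl
lemma wRho_inv_apply (n : ℕ) (p : ZMod n × Fin 2) : (wRho n)⁻¹ p = (p.1 - 1, p.2) := by
  show (wRho n).symm p = _
  simp [wRho, sub_eq_add_neg, Equiv.prodCongr]
  rfl
lemma wMu_apply (n : ℕ) (p : ZMod n × Fin 2) : wMu n p = (-p.1, p.2) := rfl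
lemma wMu_inv_apply (n : ℕ) (p : ZMod n × Fin 2) : (wMu n)⁻¹ p = (-p.1, p.2) := rfl

lemma t1perm_apply (n : ℕ) (p : ZMod n × Fin 2) :
    t1perm n p = if p.1.val % 3 ≠ 0 then (p.1, 1 - p.2) else p := rfl

lemma wT2_apply (n : ℕ) (p : ZMod n × Fin 2) :
    wT2 n p = if (p.1 + 1).val % 3 ≠ 0 then (p.1, 1 - p.2) else p := by
  show (wRho n)⁻¹ (t1perm n (wRho n p)) = _
  rw [wRho_apply, t1perm_apply]
  by_cases h : (p.1 + 1).val % 3 ≠ 0 <;> simp [h, wRho_inv_apply]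

lemma wT3_apply (n : ℕ) (p : ZMod n × Fin 2) :
    wT3 n p = if (p.1 + 1 + 1).val % 3 ≠ 0 then (p.1, 1 - p.2) else p := by
  show (wRho n)⁻¹ ((wT2 n) (wRho n p)) = _
  rw [wRho_apply, wT2_apply]
  by_cases h : (p.1 + 1 + 1).val % 3 ≠ 0 <;> simp [h, wRho_inv_apply]

lemma wT1_sq (n : ℕ) : t1perm n * t1perm n = 1 := by
  apply Equiv.ext; intro p
  simpa [Equiv.Perm.mul_apply, t1perm] using t1fun_involutive n p

lemma wT2_sq (n : ℕ) : wT2 n * wT2 n = 1 := by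
  have h : wT2 n * wT2 n = (wRho n)⁻¹ * (t1perm n * t1perm n) * wRho n := by
    unfold wT2; group
  rw [h, wT1_sq]; group

lemma finaux : ∀ s : Fin 2, 1 - (1 - s) = s := by decide

lemma wT_comm (n : ℕ) : t1perm n * wT2 n = wT2 n * t1perm n := by
  apply Equiv.ext; intro p
  by_cases ha : p.1.val % 3 ≠ 0 <;> by_cases hb : (p.1 + 1).val % 3 ≠ 0 <;>
    simp [Equiv.Perm.mul_apply, t1perm_apply, wT2_apply, ha, hb, finaux]

lemma condZ (n : ℕ) (hn : 3 ≤ n) (h3 : 3 ∣ n) (j : ZMod n) :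
    (j.val % 3 ≠ 0) ↔ ((ZMod.castHom h3 (ZMod 3)) j ≠ 0) := by
  haveI : NeZero n := ⟨by omega⟩
  rw [ZMod.castHom_apply, ← ZMod.natCast_val, Ne, Ne,
    ZMod.natCast_eq_zero_iff, Nat.dvd_iff_mod_eq_zero]

lemma wT3_eq (n : ℕ) (hn : 3 ≤ n) (h3 : 3 ∣ n) : wT3 n = t1perm n * wT2 n := by
  have hd1 : ∀ y : ZMod 3, y ≠ 0 → y + 1 ≠ 0 → ¬(y + 1 + 1 ≠ 0) := by decide
  have hd2 : ∀ y : ZMod 3, y ≠ 0 → ¬(y + 1 ≠ 0) → (y + 1 + 1 ≠ 0) := by decide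
  have hd3 : ∀ y : ZMod 3, ¬(y ≠ 0) → ((y + 1 ≠ 0) ∧ (y + 1 + 1 ≠ 0)) := by decide
  apply Equiv.ext; intro p
  have e0 := condZ n hn h3 p.1
  have e1 := condZ n hn h3 (p.1 + 1)
  have e2 := condZ n hn h3 (p.1 + 1 + 1)
  simp only [map_add, map_one] at e1 e2
  set y := (ZMod.castHom h3 (ZMod 3)) p.1 with hy
  by_cases ha : p.1.val % 3 ≠ 0 <;> by_cases hb : (p.1 + 1).val % 3 ≠ 0
  · have h2 : ¬((p.1 + 1 + 1).val % 3 ≠ 0) := by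
      rw [e2]; exact hd1 y (e0.mp ha) (e1.mp hb)
    simp [Equiv.Perm.mul_apply, t1perm_apply, wT2_apply, wT3_apply, ha, hb, h2, finaux]
  · have h2 : ((p.1 + 1 + 1).val % 3 ≠ 0) := by
      rw [e2]; exact hd2 y (e0.mp ha) (fun h => hb (e1.mpr h))
    simp [Equiv.Perm.mul_apply, t1perm_apply, wT2_apply, wT3_apply, ha, hb, h2, finaux]
  · have h0 : ¬ (y ≠ 0) := fun h => ha (e0.mpr h)
    have h2 : ((p.1 + 1 + 1).val % 3 ≠ 0) := by rw [e2]; exact (hd3 y h0).2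
    simp [Equiv.Perm.mul_apply, t1perm_apply, wT2_apply, wT3_apply, ha, hb, h2, finaux]
  · have h0 : ¬ (y ≠ 0) := fun h => ha (e0.mpr h)
    have h1 : ((p.1 + 1).val % 3 ≠ 0) := by rw [e1]; exact (hd3 y h0).1
    exact absurd h1 hb

lemma conj_rho_t1 (n : ℕ) (hn : 3 ≤ n) (h3 : 3 ∣ n) :
    wRho n * t1perm n * (wRho n)⁻¹ = wT3 n := by
  have hd : ∀ y : ZMod 3, (y - 1 = 0) ↔ (y + 1 + 1 = 0) := by decide
  apply Equiv.ext; intro p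
  have ea := condZ n hn h3 (p.1 - 1)
  have eb := condZ n hn h3 (p.1 + 1 + 1)
  simp only [map_sub, map_add, map_one] at ea eb
  have hiff : ((p.1 - 1).val % 3 ≠ 0) ↔ ((p.1 + 1 + 1).val % 3 ≠ 0) := by
    rw [ea, eb, Ne, Ne, hd]
  show wRho n (t1perm n ((wRho n)⁻¹ p)) = _
  rw [wRho_inv_apply, t1perm_apply, wT3_apply]
  by_cases h : (p.1 + 1 + 1).val % 3 ≠ 0
  · have h1 : (p.1 - 1).val % 3 ≠ 0 := hiff.mpr h
    simp [h, h1, wRho_apply, sub_add_cancel]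
  · have h1 : ¬((p.1 - 1).val % 3 ≠ 0) := fun hh => h (hiff.mp hh)
    simp [h, h1, wRho_apply, sub_add_cancel]

lemma conj_mu_t1 (n : ℕ) (hn : 3 ≤ n) (h3 : 3 ∣ n) :
    wMu n * t1perm n * (wMu n)⁻¹ = t1perm n := by
  have hd : ∀ y : ZMod 3, (-y = 0) ↔ (y = 0) := by decide
  apply Equiv.ext; intro p
  have ea := condZ n hn h3 (-p.1)
  have eb := condZ n hn h3 p.1
  simp only [map_neg] at ea
  have hiff : ((-p.1).val % 3 ≠ 0) ↔ (p.1.val % 3 ≠ 0) := by rw [ea, eb, Ne, Ne, hd]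
  show wMu n (t1perm n ((wMu n)⁻¹ p)) = _
  rw [wMu_inv_apply, t1perm_apply, t1perm_apply]
  by_cases h : p.1.val % 3 ≠ 0
  · have h1 : (-p.1).val % 3 ≠ 0 := hiff.mpr h
    simp [h, h1, wMu_apply]
  · have h1 : ¬((-p.1).val % 3 ≠ 0) := fun hh => h (hiff.mp hh)
    simp [h, h1, wMu_apply]

lemma conj_mu_t2 (n : ℕ) (hn : 3 ≤ n) (h3 : 3 ∣ n) :
    wMu n * wT2 n * (wMu n)⁻¹ = wT3 n := by
  have hd : ∀ y : ZMod 3, (-y + 1 = 0) ↔ (y + 1 + 1 = 0) := by decide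
  apply Equiv.ext; intro p
  have ea := condZ n hn h3 (-p.1 + 1)
  have eb := condZ n hn h3 (p.1 + 1 + 1)
  simp only [map_neg, map_add, map_one] at ea eb
  have hiff : ((-p.1 + 1).val % 3 ≠ 0) ↔ ((p.1 + 1 + 1).val % 3 ≠ 0) := by
    rw [ea, eb, Ne, Ne, hd]
  show wMu n (wT2 n ((wMu n)⁻¹ p)) = _
  rw [wMu_inv_apply, wT2_apply, wT3_apply]
  by_cases h : (p.1 + 1 + 1).val % 3 ≠ 0
  · have h1 : (-p.1 + 1).val % 3 ≠ 0 := hiff.mpr h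
    simp [h, h1, wMu_apply]
  · have h1 : ¬((-p.1 + 1).val % 3 ≠ 0) := fun hh => h (hiff.mp hh)
    simp [h, h1, wMu_apply]

lemma conj_mu_t3 (n : ℕ) (hn : 3 ≤ n) (h3 : 3 ∣ n) :
    wMu n * wT3 n * (wMu n)⁻¹ = wT2 n := by
  have hd : ∀ y : ZMod 3, (-y + 1 + 1 = 0) ↔ (y + 1 = 0) := by decide
  apply Equiv.ext; intro p
  have ea := condZ n hn h3 (-p.1 + 1 + 1)
  have eb := condZ n hn h3 (p.1 + 1)
  simp only [map_neg, map_add, map_one] at ea eb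
  have hiff : ((-p.1 + 1 + 1).val % 3 ≠ 0) ↔ ((p.1 + 1).val % 3 ≠ 0) := by
    rw [ea, eb, Ne, Ne, hd]
  show wMu n (wT3 n ((wMu n)⁻¹ p)) = _
  rw [wMu_inv_apply, wT3_apply, wT2_apply]
  by_cases h : (p.1 + 1).val % 3 ≠ 0
  · have h1 : (-p.1 + 1 + 1).val % 3 ≠ 0 := hiff.mpr h
    simp [h, h1, wMu_apply]
  · have h1 : ¬((-p.1 + 1 + 1).val % 3 ≠ 0) := fun hh => h (hiff.mp hh)
    simp [h, h1, wMu_apply]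

lemma conj_rho_t2 (n : ℕ) : wRho n * wT2 n * (wRho n)⁻¹ = t1perm n := by
  unfold wT2; group

lemma conj_rho_t3 (n : ℕ) : wRho n * wT3 n * (wRho n)⁻¹ = wT2 n := by
  show wRho n * ((wRho n)⁻¹ * wT2 n * wRho n) * (wRho n)⁻¹ = wT2 n
  group

lemma pow_val_add {G : Type*} [Group G] (g : G) (hg : g * g = 1) (a b : ZMod 2) :
    g ^ (a + b).val = g ^ a.val * g ^ b.val := by
  have h2 : g ^ 2 = 1 := by rw [pow_two]; exact hg
  have key : ∀ k, g ^ (k % 2) = g ^ k := by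
    intro k
    conv_rhs => rw [← Nat.div_add_mod k 2]
    rw [pow_add, pow_mul, h2, one_pow, one_mul]
  rw [ZMod.val_add, key, pow_add]

def phi (n : ℕ) : Multiplicative (ZMod 2 × ZMod 2) →* Equiv.Perm (ZMod n × Fin 2) where
  toFun x := t1perm n ^ (x.toAdd.1.val) * wT2 n ^ (x.toAdd.2.val)
  map_one' := by simp
  map_mul' x y := by
    show t1perm n ^ ((x.toAdd.1 + y.toAdd.1).val) * wT2 n ^ ((x.toAdd.2 + y.toAdd.2).val) = _
    rw [pow_val_add _ (wT1_sq n), pow_val_add _ (wT2_sq n)]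
    have hc : Commute (wT2 n) (t1perm n) := (wT_comm n).symm
    rw [(hc.pow_pow x.toAdd.2.val y.toAdd.1.val).mul_mul_mul_comm]

/-- The subgroup `T = ⟨t₁, t₂, t₃⟩` where `t₂ = ρ⁻¹ t₁ ρ` and `t₃ = ρ⁻¹ t₂ ρ`. -/
def T16 (n : ℕ) : Subgroup (Equiv.Perm (ZMod n × Fin 2)) :=
  Subgroup.closure
    {t1perm n, (wRho n)⁻¹ * t1perm n * wRho n,
     (wRho n)⁻¹ * ((wRho n)⁻¹ * t1perm n * wRho n) * wRho n}

theorem stmt_16 (n : ℕ) (hn : 3 ≤ n) (h3 : 3 ∣ n) :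
    Nat.card (T16 n) = 4 ∧
    Nonempty (T16 n ≃* Multiplicative (ZMod 2 × ZMod 2)) ∧
    (∀ x ∈ T16 n, wRho n * x * (wRho n)⁻¹ ∈ T16 n ∧
      wMu n * x * (wMu n)⁻¹ ∈ T16 n) := by
  haveI : NeZero n := ⟨by omega⟩
  haveI : Fact (1 < n) := ⟨by omega⟩
  have hset : T16 n = Subgroup.closure {t1perm n, wT2 n, wT3 n} := rfl
  have m1 : t1perm n ∈ T16 n := by
    rw [hset]; exact Subgroup.subset_closure (Set.mem_insert _ _)
  have m2 : wT2 n ∈ T16 n := by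
    rw [hset]; exact Subgroup.subset_closure (Set.mem_insert_iff.mpr (Or.inr (Or.inl rfl)))
  have m3 : wT3 n ∈ T16 n := by
    rw [hset]; exact Subgroup.subset_closure (Set.mem_insert_iff.mpr (Or.inr (Or.inr rfl)))
  have hval1 : (1 : ZMod n).val = 1 := ZMod.val_one n
  have hval2 : (2 : ZMod n).val = 2 := by
    have := ZMod.val_cast_of_lt (show 2 < n by omega)
    simpa using this
  -- injectivity of phi
  have hinj : Function.Injective (phi n) := by
    rw [injective_iff_map_eq_one]
    intro a ha
    have hcase : ∀ x : ZMod 2, x = 0 ∨ x = 1 := by decide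
    have hrep : phi n a = t1perm n ^ (a.toAdd.1.val) * wT2 n ^ (a.toAdd.2.val) := rfl
    rw [hrep] at ha
    rcases hcase a.toAdd.1 with h1 | h1 <;> rcases hcase a.toAdd.2 with h2 | h2
    · apply Multiplicative.toAdd.injective
      exact Prod.ext h1 h2
    · exfalso
      rw [h1, h2] at ha
      simp only [ZMod.val_zero, ZMod.val_one, pow_zero, pow_one, one_mul] at ha
      have := Equiv.ext_iff.mp ha ((0 : ZMod n), (0 : Fin 2))
      rw [wT2_apply] at this
      simp [hval1] at this
    · exfalso
      rw [h1, h2] at ha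
      simp only [ZMod.val_zero, ZMod.val_one, pow_zero, pow_one, mul_one] at ha
      have := Equiv.ext_iff.mp ha ((2 : ZMod n), (0 : Fin 2))
      rw [t1perm_apply] at this
      simp [hval2] at this
    · exfalso
      rw [h1, h2] at ha
      simp only [ZMod.val_one, pow_one] at ha
      have := Equiv.ext_iff.mp ha ((0 : ZMod n), (0 : Fin 2))
      rw [Equiv.Perm.mul_apply, wT2_apply] at this
      simp only [zero_add, hval1] at this
      rw [if_pos (by norm_num), t1perm_apply] at this
      simp [ZMod.val_zero] at this
  -- range of phi is T16
  have hrange : (phi n).range = T16 n := by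
    apply le_antisymm
    · rintro g ⟨x, rfl⟩
      show t1perm n ^ _ * wT2 n ^ _ ∈ T16 n
      exact mul_mem (pow_mem m1 _) (pow_mem m2 _)
    · rw [hset]
      rw [Subgroup.closure_le]
      rintro g (rfl | rfl | rfl)
      · refine ⟨Multiplicative.ofAdd ((1 : ZMod 2), (0 : ZMod 2)), ?_⟩
        show t1perm n ^ ((1 : ZMod 2)).val * wT2 n ^ ((0 : ZMod 2)).val = t1perm n
        norm_num [show ((1 : ZMod 2)).val = 1 from rfl, show ((0 : ZMod 2)).val = 0 from rfl]
      · refine ⟨Multiplicative.ofAdd ((0 : ZMod 2), (1 : ZMod 2)), ?_⟩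
        show t1perm n ^ ((0 : ZMod 2)).val * wT2 n ^ ((1 : ZMod 2)).val = wT2 n
        norm_num [show ((1 : ZMod 2)).val = 1 from rfl, show ((0 : ZMod 2)).val = 0 from rfl]
      · refine ⟨Multiplicative.ofAdd ((1 : ZMod 2), (1 : ZMod 2)), ?_⟩
        show t1perm n ^ ((1 : ZMod 2)).val * wT2 n ^ ((1 : ZMod 2)).val = wT3 n
        rw [wT3_eq n hn h3]
        norm_num [show ((1 : ZMod 2)).val = 1 from rfl]
  refine ⟨?_, ?_, ?_⟩
  · rw [← hrange]
    rw [Nat.card_congr (MonoidHom.ofInjective hinj).toEquiv.symm]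
    simp [Nat.card_eq_fintype_card]
  · exact ⟨(MulEquiv.subgroupCongr hrange.symm).trans (MonoidHom.ofInjective hinj).symm⟩
  · intro x hx
    have c1 : wRho n * wT2 n * (wRho n)⁻¹ ∈ T16 n := by rw [conj_rho_t2]; exact m1
    have c2 : wRho n * wT3 n * (wRho n)⁻¹ ∈ T16 n := by rw [conj_rho_t3]; exact m2
    have c3 : wRho n * t1perm n * (wRho n)⁻¹ ∈ T16 n := by rw [conj_rho_t1 n hn h3]; exact m3
    have c4 : wMu n * t1perm n * (wMu n)⁻¹ ∈ T16 n := by rw [conj_mu_t1 n hn h3]; exact m1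
    have c5 : wMu n * wT2 n * (wMu n)⁻¹ ∈ T16 n := by rw [conj_mu_t2 n hn h3]; exact m3
    have c6 : wMu n * wT3 n * (wMu n)⁻¹ ∈ T16 n := by rw [conj_mu_t3 n hn h3]; exact m2
    refine Subgroup.closure_induction ?_ ?_ ?_ ?_ hx
    · rintro g (rfl | rfl | rfl)
      · exact ⟨c3, c4⟩
      · exact ⟨c1, c5⟩
      · exact ⟨c2, c6⟩
    · constructor
      · have e : wRho n * (1 : Equiv.Perm (ZMod n × Fin 2)) * (wRho n)⁻¹ = 1 := by group
        rw [e]; exact (T16 n).one_mem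
      · have e : wMu n * (1 : Equiv.Perm (ZMod n × Fin 2)) * (wMu n)⁻¹ = 1 := by group
        rw [e]; exact (T16 n).one_mem
    · intro a b _ _ pa pb
      constructor
      · have e : wRho n * (a * b) * (wRho n)⁻¹ =
            (wRho n * a * (wRho n)⁻¹) * (wRho n * b * (wRho n)⁻¹) := by group
        rw [e]; exact mul_mem pa.1 pb.1
      · have e : wMu n * (a * b) * (wMu n)⁻¹ =
            (wMu n * a * (wMu n)⁻¹) * (wMu n * b * (wMu n)⁻¹) := by group
        rw [e]; exact mul_mem pa.2 pb.2
    · intro a _ pa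
      constructor
      · have e : wRho n * a⁻¹ * (wRho n)⁻¹ = (wRho n * a * (wRho n)⁻¹)⁻¹ := by group
        rw [e]; exact inv_mem pa.1
      · have e : wMu n * a⁻¹ * (wMu n)⁻¹ = (wMu n * a * (wMu n)⁻¹)⁻¹ := by group
        rw [e]; exact inv_mem pa.2
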